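/- For every n ≥ 2 and R ≥ 0, there exists a configuration x = (C, J_1, …, J_n) ∈ M_n(R) having a folded arm (i.e. C = B_k for some k) if and only if R ≤ R_n. -/

import Mathlib

/-- Euclidean norm of a vector in ℝ². -/
noncomputable def enorm2 (v : ℝ × ℝ) : ℝ := Real.sqrt (v.1 ^ 2 + v.2 ^ 2)

/-- The k-th fixed endpoint `B_k = (R cos(2kπ/n), R sin(2kπ/n))` (indices from 0). -/
noncomputable def Bpt (n : ℕ) (R : ℝ) (k : Fin n) : ℝ × ℝ :=
  (R * Real.cos (2 * (k.val : ℝ) * Real.pi / (n : ℝ)),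
   R * Real.sin (2 * (k.val : ℝ) * Real.pi / (n : ℝ)))

/-- The configuration space `M_n(R)` of spiders with `n` arms of radius `R`,
as a subset of `(ℝ²)^{n+1} ≅ ℝ^{2n+2}`: a pair `(C, J)` with
`|C − J_k| = 1` and `|J_k − B_k| = 1` for all `k`. -/
noncomputable def MSpace (n : ℕ) (R : ℝ) : Set ((ℝ × ℝ) × (Fin n → ℝ × ℝ)) :=
  {x | ∀ k : Fin n, enorm2 (x.1 - x.2 k) = 1 ∧ enorm2 (x.2 k - Bpt n R k) = 1}

/-- `d_n`, the maximum distance between `n`-th roots of unity. -/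
noncomputable def dmax (n : ℕ) : ℝ :=
  if Even n then 2
  else Real.sqrt (2 - 2 * Real.cos (2 * ((n / 2 : ℕ) : ℝ) * Real.pi / (n : ℝ)))

/-- The critical radius `R_n = 2 / d_n`. -/
noncomputable def Rcrit (n : ℕ) : ℝ := 2 / dmax n

open Real

lemma enorm2_eq_one_iff (v : ℝ × ℝ) : enorm2 v = 1 ↔ v.1 ^ 2 + v.2 ^ 2 = 1 := by
  unfold enorm2
  constructor
  · intro h
    have h1 : (0:ℝ) ≤ v.1 ^ 2 + v.2 ^ 2 := by positivity
    have := congrArg (fun t => t ^ 2) h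
    simpa [Real.sq_sqrt h1] using this
  · intro h; rw [h]; exact Real.sqrt_one

lemma enorm2_eq_abs (v : ℝ × ℝ) : enorm2 v = ‖(⟨v.1, v.2⟩ : ℂ)‖ := by
  rw [Complex.norm_def, Complex.normSq_mk]; unfold enorm2; ring_nf

lemma enorm2_triangle (u v w : ℝ × ℝ) :
    enorm2 (u - w) ≤ enorm2 (u - v) + enorm2 (v - w) := by
  have h : ∀ a b : ℝ × ℝ, (⟨(a-b).1, (a-b).2⟩ : ℂ) = ⟨a.1, a.2⟩ - ⟨b.1, b.2⟩ := by
    intro a b; apply Complex.ext <;> simp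
  rw [enorm2_eq_abs, enorm2_eq_abs, enorm2_eq_abs, h, h, h]
  exact norm_sub_le_norm_sub_add_norm_sub _ _ _

lemma chord (R a b : ℝ) (hR : 0 ≤ R) :
    enorm2 ((R * Real.cos a, R * Real.sin a) - (R * Real.cos b, R * Real.sin b))
      = R * Real.sqrt (2 - 2 * Real.cos (a - b)) := by
  unfold enorm2
  have h1 : ((R * Real.cos a, R * Real.sin a) - (R * Real.cos b, R * Real.sin b) : ℝ × ℝ)
      = (R * Real.cos a - R * Real.cos b, R * Real.sin a - R * Real.sin b) := rfl
  rw [h1]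
  have h2 : (R * Real.cos a - R * Real.cos b) ^ 2 + (R * Real.sin a - R * Real.sin b) ^ 2
      = R ^ 2 * (2 - 2 * Real.cos (a - b)) := by
    rw [Real.cos_sub]
    have ha := Real.sin_sq_add_cos_sq a
    have hb := Real.sin_sq_add_cos_sq b
    nlinarith [ha, hb]
  rw [h2, Real.sqrt_mul (sq_nonneg R), Real.sqrt_sq hR]

lemma dmax_eq (n : ℕ) (hn : 2 ≤ n) :
    dmax n = Real.sqrt (2 - 2 * Real.cos (2 * ((n / 2 : ℕ) : ℝ) * Real.pi / (n : ℝ))) := by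
  unfold dmax
  split_ifs with h
  · have hn0 : (n:ℝ) ≠ 0 := by positivity
    have h2 : ((n / 2 : ℕ) : ℝ) * 2 = (n : ℝ) := by
      exact_mod_cast congrArg (Nat.cast : ℕ → ℝ) (Nat.div_mul_cancel h.two_dvd)
    have hang : 2 * ((n / 2 : ℕ) : ℝ) * Real.pi / (n : ℝ) = Real.pi := by
      field_simp
      linear_combination h2
    rw [hang, Real.cos_pi]
    rw [show (2:ℝ) - 2 * (-1) = 2 ^ 2 by norm_num, Real.sqrt_sq (by norm_num)]
  · rfl

lemma two_mul_half_le (n : ℕ) : 2 * ((n / 2 : ℕ) : ℝ) ≤ (n : ℝ) := by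
  have h : (n / 2) * 2 ≤ n := Nat.div_mul_le_self n 2
  have h2 := (Nat.cast_le (α := ℝ)).mpr h
  push_cast at h2
  linarith

lemma dmax_pos (n : ℕ) (hn : 2 ≤ n) : 0 < dmax n := by
  rw [dmax_eq n hn]
  have hnpos : (0:ℝ) < n := by positivity
  have hm1 : 1 ≤ n / 2 := Nat.one_le_div_iff (by norm_num) |>.mpr hn
  have hθpos : 0 < 2 * ((n / 2 : ℕ) : ℝ) * Real.pi / (n : ℝ) := by
    have : (1:ℝ) ≤ ((n / 2 : ℕ) : ℝ) := by exact_mod_cast hm1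
    have := Real.pi_pos
    positivity
  have hθle : 2 * ((n / 2 : ℕ) : ℝ) * Real.pi / (n : ℝ) ≤ Real.pi := by
    rw [div_le_iff₀ hnpos]
    nlinarith [two_mul_half_le n, Real.pi_pos]
  have hcos : Real.cos (2 * ((n / 2 : ℕ) : ℝ) * Real.pi / (n : ℝ)) < 1 := by
    have := Real.cos_lt_cos_of_nonneg_of_le_pi le_rfl hθle hθpos
    simpa using this
  apply Real.sqrt_pos.mpr; linarith

lemma cos_half_le (n k : ℕ) (hn : 2 ≤ n) (hk : k < n) :
    Real.cos (2 * ((n / 2 : ℕ) : ℝ) * Real.pi / (n : ℝ))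
      ≤ Real.cos (2 * (k : ℝ) * Real.pi / (n : ℝ)) := by
  have hnpos : (0:ℝ) < n := by positivity
  have hπ := Real.pi_pos
  have hθle : 2 * ((n / 2 : ℕ) : ℝ) * Real.pi / (n : ℝ) ≤ Real.pi := by
    rw [div_le_iff₀ hnpos]
    nlinarith [two_mul_half_le n]
  rcases le_or_gt k (n / 2) with hkm | hkm
  · apply Real.cos_le_cos_of_nonneg_of_le_pi (by positivity) hθle
    have hc : (k:ℝ) ≤ ((n/2 : ℕ):ℝ) := by exact_mod_cast hkm
    gcongr
  · have hkn : n - k ≤ n / 2 := by omega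
    have hcast : (2:ℝ) * (k:ℝ) * Real.pi / (n:ℝ)
        = 2 * Real.pi - 2 * ((n - k : ℕ) : ℝ) * Real.pi / (n : ℝ) := by
      rw [Nat.cast_sub hk.le]
      field_simp
      ring
    rw [hcast, Real.cos_two_pi_sub]
    apply Real.cos_le_cos_of_nonneg_of_le_pi (by positivity) hθle
    have hc : ((n - k : ℕ):ℝ) ≤ ((n/2 : ℕ):ℝ) := by exact_mod_cast hkn
    gcongr

lemma exists_joint (P Q : ℝ × ℝ) (h : enorm2 (Q - P) ≤ 2) :
    ∃ J : ℝ × ℝ, enorm2 (P - J) = 1 ∧ enorm2 (J - Q) = 1 := by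
  set p := (Q - P).1 with hp
  set q := (Q - P).2 with hq
  set d := enorm2 (Q - P) with hdd
  have hd0 : 0 ≤ d := Real.sqrt_nonneg _
  have hd2 : d ^ 2 = p ^ 2 + q ^ 2 := Real.sq_sqrt (by positivity)
  by_cases hd : d = 0
  · have hpq : p ^ 2 + q ^ 2 = 0 := by rw [← hd2, hd]; ring
    have hp0 : p = 0 := by nlinarith [sq_nonneg p, sq_nonneg q]
    have hq0 : q = 0 := by nlinarith [sq_nonneg p, sq_nonneg q]
    have hQP : Q = P := by
      have h0 : Q - P = 0 := by
        have hcomp : (Q - P) = ((Q - P).1, (Q - P).2) := rfl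
        rw [hcomp, ← hp, ← hq, hp0, hq0]
        rfl
      exact sub_eq_zero.mp h0
    refine ⟨P + (1, 0), ?_, ?_⟩
    · rw [enorm2_eq_one_iff]
      simp [Prod.fst_sub, Prod.snd_sub, Prod.fst_add, Prod.snd_add]
    · rw [enorm2_eq_one_iff, hQP]
      simp [Prod.fst_sub, Prod.snd_sub, Prod.fst_add, Prod.snd_add]
  · have hdpos : 0 < d := lt_of_le_of_ne hd0 (Ne.symm hd)
    set s := Real.sqrt (1 - d ^ 2 / 4) with hs
    have hs2 : s ^ 2 = 1 - d ^ 2 / 4 := Real.sq_sqrt (by nlinarith)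
    refine ⟨P + (p / 2 - q * s / d, q / 2 + p * s / d), ?_, ?_⟩
    · rw [enorm2_eq_one_iff]
      have h1 : (P - (P + (p / 2 - q * s / d, q / 2 + p * s / d))).1 = -(p/2 - q*s/d) := by
        simp [Prod.fst_sub, Prod.fst_add]
      have h2 : (P - (P + (p / 2 - q * s / d, q / 2 + p * s / d))).2 = -(q/2 + p*s/d) := by
        simp [Prod.snd_sub, Prod.snd_add]
      rw [h1, h2]
      field_simp
      nlinarith [hs2, hd2]
    · rw [enorm2_eq_one_iff]
      have h1 : ((P + (p / 2 - q * s / d, q / 2 + p * s / d)) - Q).1 = -(p/2 + q*s/d) := by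
        simp only [Prod.fst_sub, Prod.fst_add] at hp ⊢; linarith
      have h2 : ((P + (p / 2 - q * s / d, q / 2 + p * s / d)) - Q).2 = -(q/2 - p*s/d) := by
        simp only [Prod.snd_sub, Prod.snd_add] at hq ⊢; linarith
      rw [h1, h2]
      field_simp
      nlinarith [hs2, hd2]

/-- For `n ≥ 2` and `R ≥ 0`, there exists a configuration in `M_n(R)` with a folded
arm (`C = B_k` for some `k`) if and only if `R ≤ R_n`. -/
theorem stmt2 (n : ℕ) (hn : 2 ≤ n) (R : ℝ) (hR : 0 ≤ R) :
    (∃ x ∈ MSpace n R, ∃ k : Fin n, x.1 = Bpt n R k) ↔ R ≤ Rcrit n := by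
  have hnpos : 0 < n := by omega
  have hnR : (0:ℝ) < n := by positivity
  have hdpos := dmax_pos n hn
  constructor
  · rintro ⟨x, hx, k, hk⟩
    set m := n / 2 with hm
    set j : Fin n := ⟨(k.val + m) % n, Nat.mod_lt _ hnpos⟩ with hj
    have tri : enorm2 (Bpt n R k - Bpt n R j) ≤ 2 := by
      rw [← hk]
      calc enorm2 (x.1 - Bpt n R j)
          ≤ enorm2 (x.1 - x.2 j) + enorm2 (x.2 j - Bpt n R j) := enorm2_triangle _ _ _
        _ = 2 := by rw [(hx j).1, (hx j).2]; norm_num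
    have hang : Real.cos (2 * (k.val : ℝ) * Real.pi / n - 2 * (j.val : ℝ) * Real.pi / n)
        = Real.cos (2 * ((m : ℕ) : ℝ) * Real.pi / n) := by
      set q := (k.val + m) / n with hqn
      have hmd : ((k.val + m) % n : ℕ) + n * q = k.val + m := Nat.mod_add_div _ _
      have hcast : (2:ℝ) * (k.val : ℝ) * Real.pi / n - 2 * (j.val : ℝ) * Real.pi / n
          = (q : ℤ) * (2 * Real.pi) - 2 * ((m : ℕ) : ℝ) * Real.pi / n := by
        have hb : ((j.val : ℕ) : ℝ) + (n : ℝ) * (q : ℝ) = (k.val : ℝ) + (m : ℝ) := by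
          exact_mod_cast congrArg (Nat.cast : ℕ → ℝ) hmd
        field_simp
        push_cast
        nlinarith [hb, Real.pi_pos]
      rw [hcast, Real.cos_int_mul_two_pi_sub]
    have hch : enorm2 (Bpt n R k - Bpt n R j) = R * dmax n := by
      unfold Bpt
      rw [chord R _ _ hR, hang, dmax_eq n hn]
    rw [hch] at tri
    unfold Rcrit
    rw [le_div_iff₀ hdpos]
    linarith
  · intro hRle
    set k0 : Fin n := ⟨0, hnpos⟩ with hk0
    set C := Bpt n R k0 with hC
    have hexists : ∀ k : Fin n, ∃ J : ℝ × ℝ,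
        enorm2 (C - J) = 1 ∧ enorm2 (J - Bpt n R k) = 1 := by
      intro k
      apply exists_joint
      have hch : enorm2 (Bpt n R k - C) = R * Real.sqrt (2 - 2 * Real.cos (2 * (k.val : ℝ) * Real.pi / n)) := by
        rw [hC]
        unfold Bpt
        rw [chord R _ _ hR]
        norm_num
      rw [hch]
      have h1 : Real.sqrt (2 - 2 * Real.cos (2 * (k.val : ℝ) * Real.pi / n)) ≤ dmax n := by
        rw [dmax_eq n hn]
        apply Real.sqrt_le_sqrt
        have := cos_half_le n k.val hn k.isLt
        linarith
      have h2 : R * dmax n ≤ 2 := by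
        have := (le_div_iff₀ hdpos).mp (hRle.trans_eq rfl)
        linarith [this]
      calc R * Real.sqrt (2 - 2 * Real.cos (2 * (k.val : ℝ) * Real.pi / n))
          ≤ R * dmax n := by apply mul_le_mul_of_nonneg_left h1 hR
        _ ≤ 2 := h2
    choose J hJ using hexists
    refine ⟨(C, J), ?_, k0, rfl⟩
    intro k
    exact ⟨(hJ k).1, (hJ k).2⟩
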